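/- Policy gradient theorem (finite, discounted): for a differentiable parametrized policy π_θ with π_θ(a|s) > 0, the gradient of J(θ) = E_{s0~q}[V^{π_θ}(s0)] satisfies ∇_θ J(θ) = (1/(1-γ)) · E_{s~d^{π_θ}_q, a~π_θ(·|s)}[ Q^{π_θ}(s,a) · ∇_θ log π_θ(a|s) ], where d^{π_θ}_q is the normalized discounted state-occupancy measure. -/

import Mathlib

open scoped BigOperators

/-- `P` is a transition kernel: each `P s a` is a probability distribution on states. -/
def IsKernel {S A : Type*} [Fintype S] (P : S → A → S → ℝ) : Prop :=
  ∀ s a, (∀ s', 0 ≤ P s a s') ∧ (∑ s', P s a s') = 1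

/-- `π` is a randomized stationary policy. -/
def IsPolicy {S A : Type*} [Fintype A] (π : S → A → ℝ) : Prop :=
  ∀ s, (∀ a, 0 ≤ π s a) ∧ (∑ a, π s a) = 1

/-- State-transition matrix induced by a policy. -/
noncomputable def Pmat {S A : Type*} [Fintype A] (P : S → A → S → ℝ) (π : S → A → ℝ) :
    Matrix S S ℝ :=
  Matrix.of fun s s' => ∑ a, π s a * P s a s'

/-- Expected one-step reward under a policy. -/
noncomputable def rPol {S A : Type*} [Fintype A] (r : S → A → ℝ) (π : S → A → ℝ) : S → ℝ :=
  fun s => ∑ a, π s a * r s a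

/-- Expected discounted reward of the stationary policy `π` started at `s`. -/
noncomputable def polValue {S A : Type*} [Fintype S] [Fintype A] [DecidableEq S]
    (P : S → A → S → ℝ) (r : S → A → ℝ) (γ : ℝ) (π : S → A → ℝ) : S → ℝ :=
  fun s => ∑' t : ℕ, γ ^ t * ((Pmat P π ^ t).mulVec (rPol r π)) s

/-- The Bellman optimality operator. -/
noncomputable def bellman {S A : Type*} [Fintype S] [Fintype A]
    (P : S → A → S → ℝ) (r : S → A → ℝ) (γ : ℝ) (V : S → ℝ) : S → ℝ :=
  fun s => ⨆ a, (r s a + γ * ∑ s', P s a s' * V s')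

/-- Primal (LP) feasibility: `V ≥ T V` pointwise, written constraint-wise. -/
def PrimalFeasible {S A : Type*} [Fintype S]
    (P : S → A → S → ℝ) (r : S → A → ℝ) (γ : ℝ) (V : S → ℝ) : Prop :=
  ∀ s a, r s a + γ * ∑ s', P s a s' * V s' ≤ V s

/-- Dual (LP) feasibility: nonnegativity and the flow-conservation constraint. -/
def DualFeasible {S A : Type*} [Fintype S] [Fintype A]
    (P : S → A → S → ℝ) (q : S → ℝ) (γ : ℝ) (μ : S → A → ℝ) : Prop :=
  (∀ s a, 0 ≤ μ s a) ∧
  ∀ s, ∑ a, μ s a = (1 - γ) * q s + γ * ∑ s', ∑ a', P s' a' s * μ s' a'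

section Aux

variable {S A : Type*} [Fintype S] [Fintype A] [DecidableEq S]

lemma pg_norm_Pmat_le (P : S → A → S → ℝ) (π' : S → A → ℝ)
    (hP : IsKernel P) (hpol : IsPolicy π') :
    letI := Matrix.linftyOpNormedRing (α := ℝ) (n := S)
    ‖Pmat P π'‖ ≤ 1 := by
  letI := Matrix.linftyOpNormedRing (α := ℝ) (n := S)
  rw [Matrix.linfty_opNorm_def]
  have : (Finset.univ.sup fun i : S => ∑ j : S, ‖Pmat P π' i j‖₊) ≤ 1 := by
    refine Finset.sup_le fun i _ => ?_
    rw [← NNReal.coe_le_coe]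
    push_cast
    have hnn : ∀ j, ‖Pmat P π' i j‖ = Pmat P π' i j := fun j =>
      Real.norm_of_nonneg (Finset.sum_nonneg fun a _ =>
        mul_nonneg ((hpol i).1 a) ((hP i a).1 j))
    calc ∑ j : S, ‖Pmat P π' i j‖ = ∑ j : S, ∑ a, π' i a * P i a j := by
          simp only [hnn]; rfl
      _ = ∑ a, π' i a * ∑ j, P i a j := by
          rw [Finset.sum_comm]; simp [Finset.mul_sum]
      _ = 1 := by simp only [(hP i _).2]; simpa using (hpol i).2
      _ ≤ 1 := le_rfl
  exact_mod_cast this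

end Aux

section Aux2

variable {S A : Type*} [Fintype S] [Fintype A] [DecidableEq S]

private lemma pg_swap2 {ι κ : Type*} [Fintype ι] [Fintype κ]
    (g : ι → κ → ℝ) (u : ι → ℝ) (v : κ → ℝ) :
    ∑ j, (∑ i, u i * g i j) * v j = ∑ i, u i * ∑ j, g i j * v j := by
  simp only [Finset.sum_mul, Finset.mul_sum]
  rw [Finset.sum_comm]
  exact Finset.sum_congr rfl fun i _ => Finset.sum_congr rfl fun j _ => by ring

private lemma pg_sum_identity (qv rp0 : S → ℝ) (W K : Matrix S S ℝ)
    (P : S → A → S → ℝ) (r : S → A → ℝ) (δ : S → A → ℝ) (γ : ℝ)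
    (hK : ∀ i j, K i j = ∑ a, δ i a * P i a j) :
    ∑ s, ∑ s', qv s * (W s s' * (∑ a, r s' a * δ s' a) + rp0 s' * (γ * (W * K * W) s s'))
      = ∑ s, ∑ a, (∑ u, qv u * W u s) * δ s a *
          (r s a + γ * ∑ s', P s a s' * (∑ w, W s' w * rp0 w)) := by
  classical
  set Db : S → ℝ := fun s => ∑ u, qv u * W u s with hDb
  set V : S → ℝ := fun w => ∑ y, W w y * rp0 y with hV
  have hDb' : Matrix.vecMul qv W = Db := rfl
  have hsplit : ∀ s s', qv s * (W s s' * (∑ a, r s' a * δ s' a) + rp0 s' * (γ * (W * K * W) s s'))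
      = qv s * (W s s' * (∑ a, r s' a * δ s' a)) + γ * ((W * K * W) s s' * rp0 s' * qv s) := by
    intro s s'; ring
  have hterm1 : ∑ s, ∑ s', qv s * (W s s' * (∑ a, r s' a * δ s' a))
      = ∑ s', Db s' * (∑ a, r s' a * δ s' a) := by
    calc ∑ s, ∑ s', qv s * (W s s' * (∑ a, r s' a * δ s' a))
        = ∑ s, qv s * ∑ s', W s s' * (∑ a, r s' a * δ s' a) :=
          Finset.sum_congr rfl fun s _ => (Finset.mul_sum _ _ _).symm
      _ = ∑ s', (∑ s, qv s * W s s') * (∑ a, r s' a * δ s' a) :=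
          (pg_swap2 W qv _).symm
      _ = ∑ s', Db s' * (∑ a, r s' a * δ s' a) := rfl
  have hterm2 : ∑ s, ∑ s', (W * K * W) s s' * rp0 s' * qv s
      = ∑ u, Db u * ∑ a, δ u a * ∑ w, P u a w * V w := by
    have e1 : ∑ s, ∑ s', (W * K * W) s s' * rp0 s' * qv s
        = ∑ s', (∑ s, qv s * (W * K * W) s s') * rp0 s' := by
      rw [Finset.sum_comm]
      exact Finset.sum_congr rfl fun s' _ => by
        rw [Finset.sum_mul]; exact Finset.sum_congr rfl fun s _ => by ring
    have e2 : ∀ s', (∑ s, qv s * (W * K * W) s s')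
        = ∑ w, (∑ u, Db u * K u w) * W w s' := by
      intro s'
      have : Matrix.vecMul qv (W * K * W) s' = Matrix.vecMul (Matrix.vecMul (Matrix.vecMul qv W) K) W s' := by
        rw [← Matrix.vecMul_vecMul, ← Matrix.vecMul_vecMul]
      simpa [Matrix.vecMul, dotProduct, hDb'] using this
    rw [e1]
    simp only [e2]
    rw [pg_swap2 W (fun w => ∑ u, Db u * K u w) rp0]
    have e3 : ∀ w, (∑ y, W w y * rp0 y) = V w := fun w => rfl
    simp only [e3]
    rw [pg_swap2 K Db V]
    refine Finset.sum_congr rfl fun u _ => ?_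
    congr 1
    have e4 : ∀ w, K u w * V w = (∑ a, δ u a * P u a w) * V w := fun w => by rw [hK]
    simp only [e4]
    rw [pg_swap2 (fun a w => P u a w) (δ u) V]
  calc ∑ s, ∑ s', qv s * (W s s' * (∑ a, r s' a * δ s' a) + rp0 s' * (γ * (W * K * W) s s'))
      = (∑ s, ∑ s', qv s * (W s s' * (∑ a, r s' a * δ s' a)))
          + γ * ∑ s, ∑ s', (W * K * W) s s' * rp0 s' * qv s := by
        simp only [hsplit, Finset.sum_add_distrib]
        congr 1
        rw [Finset.mul_sum]
        exact Finset.sum_congr rfl fun s _ => (Finset.mul_sum _ _ _).symm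
    _ = (∑ s', Db s' * (∑ a, r s' a * δ s' a))
          + γ * ∑ u, Db u * ∑ a, δ u a * ∑ w, P u a w * V w := by rw [hterm1, hterm2]
    _ = ∑ s, ∑ a, Db s * δ s a * (r s a + γ * ∑ s', P s a s' * V s') := by
        rw [Finset.mul_sum, ← Finset.sum_add_distrib]
        refine Finset.sum_congr rfl fun s _ => ?_
        rw [Finset.mul_sum, Finset.mul_sum,
          Finset.mul_sum Finset.univ (fun a => Db s * (δ s a * ∑ w, P s a w * V w)) γ,
          ← Finset.sum_add_distrib]
        exact Finset.sum_congr rfl fun a _ => by ring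
    _ = ∑ s, ∑ a, (∑ u, qv u * W u s) * δ s a *
          (r s a + γ * ∑ s', P s a s' * (∑ w, W s' w * rp0 w)) := rfl

end Aux2

section Aux3

variable {S A : Type*} [Fintype S] [Fintype A] [DecidableEq S]

private lemma pg_norm_smul_lt (P : S → A → S → ℝ) (π' : S → A → ℝ) {γ : ℝ}
    (hP : IsKernel P) (hγ0 : 0 ≤ γ) (hγ1 : γ < 1) (hpol : IsPolicy π') :
    letI := Matrix.linftyOpNormedRing (α := ℝ) (n := S)
    ‖γ • Pmat P π'‖ < 1 := by
  letI := Matrix.linftyOpNormedRing (α := ℝ) (n := S)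
  letI : NormedAlgebra ℝ (Matrix S S ℝ) := Matrix.linftyOpNormedAlgebra
  have h1 := pg_norm_Pmat_le P π' hP hpol
  calc ‖γ • Pmat P π'‖ = γ * ‖Pmat P π'‖ := by
        rw [norm_smul, Real.norm_of_nonneg hγ0]
    _ ≤ γ * 1 := by exact mul_le_mul_of_nonneg_left h1 hγ0
    _ < 1 := by linarith

private lemma pg_polValue_eq (P : S → A → S → ℝ) (r : S → A → ℝ) {γ : ℝ} (π' : S → A → ℝ)
    (hP : IsKernel P) (hγ0 : 0 ≤ γ) (hγ1 : γ < 1) (hpol : IsPolicy π') :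
    polValue P r γ π'
      = (Ring.inverse ((1 : Matrix S S ℝ) - γ • Pmat P π')).mulVec (rPol r π') := by
  letI := Matrix.linftyOpNormedRing (α := ℝ) (n := S)
  letI : NormedAlgebra ℝ (Matrix S S ℝ) := Matrix.linftyOpNormedAlgebra
  letI : CompleteSpace (Matrix S S ℝ) := FiniteDimensional.complete ℝ _
  have hlt := pg_norm_smul_lt P π' hP hγ0 hγ1 hpol
  have hs := hasSum_geom_series_inverse (γ • Pmat P π') hlt
  funext s
  let L : Matrix S S ℝ →ₗ[ℝ] ℝ :=
    { toFun := fun M => M.mulVec (rPol r π') s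
      map_add' := fun M N => by simp [Matrix.add_mulVec, Pi.add_apply]
      map_smul' := fun c M => by simp [Matrix.smul_mulVec] }
  have hs2 := (LinearMap.toContinuousLinearMap L).hasSum hs
  have hfun : ∀ t : ℕ, (LinearMap.toContinuousLinearMap L) ((γ • Pmat P π') ^ t)
      = γ ^ t * ((Pmat P π' ^ t).mulVec (rPol r π')) s := by
    intro t
    show L ((γ • Pmat P π') ^ t) = _
    rw [smul_pow]
    show ((γ ^ t • Pmat P π' ^ t).mulVec (rPol r π')) s = _
    rw [Matrix.smul_mulVec]
    simp
  have hs3 : HasSum (fun t : ℕ => γ ^ t * ((Pmat P π' ^ t).mulVec (rPol r π')) s)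
      ((Ring.inverse ((1 : Matrix S S ℝ) - γ • Pmat P π')).mulVec (rPol r π') s) := by
    simp only [hfun] at hs2
    exact hs2
  exact hs3.tsum_eq

private lemma pg_vecMul_eq (P : S → A → S → ℝ) {γ : ℝ} (π' : S → A → ℝ) (q : S → ℝ)
    (hP : IsKernel P) (hγ0 : 0 ≤ γ) (hγ1 : γ < 1) (hpol : IsPolicy π') (s : S) :
    (∑' t : ℕ, γ ^ t * Matrix.vecMul q (Pmat P π' ^ t) s)
      = Matrix.vecMul q (Ring.inverse ((1 : Matrix S S ℝ) - γ • Pmat P π')) s := by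
  letI := Matrix.linftyOpNormedRing (α := ℝ) (n := S)
  letI : NormedAlgebra ℝ (Matrix S S ℝ) := Matrix.linftyOpNormedAlgebra
  letI : CompleteSpace (Matrix S S ℝ) := FiniteDimensional.complete ℝ _
  have hlt := pg_norm_smul_lt P π' hP hγ0 hγ1 hpol
  have hs := hasSum_geom_series_inverse (γ • Pmat P π') hlt
  let L : Matrix S S ℝ →ₗ[ℝ] ℝ :=
    { toFun := fun M => Matrix.vecMul q M s
      map_add' := fun M N => by
        simp [Matrix.vecMul, dotProduct, Matrix.add_apply, mul_add,
          Finset.sum_add_distrib]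
      map_smul' := fun c M => by
        simp [Matrix.vecMul, dotProduct, Matrix.smul_apply, smul_eq_mul,
          Finset.mul_sum, mul_left_comm] }
  have hs2 := (LinearMap.toContinuousLinearMap L).hasSum hs
  have hfun : ∀ t : ℕ, (LinearMap.toContinuousLinearMap L) ((γ • Pmat P π') ^ t)
      = γ ^ t * Matrix.vecMul q (Pmat P π' ^ t) s := by
    intro t
    show L ((γ • Pmat P π') ^ t) = _
    rw [smul_pow]
    show Matrix.vecMul q (γ ^ t • Pmat P π' ^ t) s = _
    simp [Matrix.vecMul, dotProduct, Matrix.smul_apply, smul_eq_mul,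
      Finset.mul_sum, mul_left_comm]
  have hs3 : HasSum (fun t : ℕ => γ ^ t * Matrix.vecMul q (Pmat P π' ^ t) s)
      (Matrix.vecMul q (Ring.inverse ((1 : Matrix S S ℝ) - γ • Pmat P π')) s) := by
    simp only [hfun] at hs2
    exact hs2
  exact hs3.tsum_eq

end Aux3

section Aux4

variable {S A : Type*} [Fintype S] [Fintype A] [DecidableEq S]

private noncomputable def Emat (P : S → A → S → ℝ) (s : S) (a : A) : Matrix S S ℝ :=
  Matrix.of fun u s' => if u = s then P s a s' else 0

private lemma pg_E_sum (P : S → A → S → ℝ) (c : S → A → ℝ) (i j : S) :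
    (∑ s, ∑ a, c s a • Emat P s a) i j = ∑ a, c i a * P i a j := by
  simp only [Matrix.sum_apply, Matrix.smul_apply, Emat, Matrix.of_apply, smul_eq_mul,
    mul_ite, mul_zero]
  rw [Finset.sum_eq_single i]
  · simp
  · intro b _ hb
    exact Finset.sum_eq_zero fun a _ => if_neg (Ne.symm hb)
  · intro h
    exact absurd (Finset.mem_univ i) h

private lemma pg_Pmat_eq (P : S → A → S → ℝ) (ρ : S → A → ℝ) :
    Pmat P ρ = ∑ s, ∑ a, ρ s a • Emat P s a := by
  ext i j
  rw [pg_E_sum]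
  rfl

end Aux4

/-- the policy gradient theorem (finite, discounted). -/
theorem policy_gradient_theorem
    {S A : Type*} [Fintype S] [Fintype A] [DecidableEq S] {d : ℕ}
    (P : S → A → S → ℝ) (r : S → A → ℝ) (γ : ℝ) (q : S → ℝ)
    (hP : IsKernel P) (hγ0 : 0 ≤ γ) (hγ1 : γ < 1)
    (hq0 : ∀ s, 0 ≤ q s) (hq1 : ∑ s, q s = 1)
    (π : (Fin d → ℝ) → S → A → ℝ) (θ0 : Fin d → ℝ)
    (hpol : ∀ θ, IsPolicy (π θ))
    (hpos : ∀ θ s a, 0 < π θ s a)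
    (hdiff : ∀ s a, DifferentiableAt ℝ (fun θ => π θ s a) θ0) :
    fderiv ℝ (fun θ => ∑ s, q s * polValue P r γ (π θ) s) θ0 =
      (1 - γ)⁻¹ • ∑ s, ∑ a,
        (((1 - γ) * ∑' t : ℕ, γ ^ t * Matrix.vecMul q (Pmat P (π θ0) ^ t) s) *
            π θ0 s a *
            (r s a + γ * ∑ s', P s a s' * polValue P r γ (π θ0) s')) •
          fderiv ℝ (fun θ => Real.log (π θ s a)) θ0 := by
  classical
  letI := Matrix.linftyOpNormedRing (α := ℝ) (n := S)
  letI : NormedAlgebra ℝ (Matrix S S ℝ) := Matrix.linftyOpNormedAlgebra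
  letI : CompleteSpace (Matrix S S ℝ) := FiniteDimensional.complete ℝ _
  have hlt := pg_norm_smul_lt P (π θ0) hP hγ0 hγ1 (hpol θ0)
  let u : (Matrix S S ℝ)ˣ := Units.oneSub (γ • Pmat P (π θ0)) hlt
  let W : Matrix S S ℝ := Ring.inverse ((1 : Matrix S S ℝ) - γ • Pmat P (π θ0))
  have hWu : (↑u⁻¹ : Matrix S S ℝ) = W := (Ring.inverse_unit u).symm
  -- derivative data for the policy
  let Dp : S → A → ((Fin d → ℝ) →L[ℝ] ℝ) := fun s a => fderiv ℝ (fun θ => π θ s a) θ0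
  have hD : ∀ s a, HasFDerivAt (fun θ => π θ s a) (Dp s a) θ0 :=
    fun s a => (hdiff s a).hasFDerivAt
  -- derivative of the transition matrix
  let M' : (Fin d → ℝ) →L[ℝ] Matrix S S ℝ := ∑ s, ∑ a, (Dp s a).smulRight (Emat P s a)
  have hPmat' : HasFDerivAt (fun θ => Pmat P (π θ)) M' θ0 := by
    have h1 : (fun θ => Pmat P (π θ)) = fun θ => ∑ s, ∑ a, π θ s a • Emat P s a :=
      funext fun θ => pg_Pmat_eq P (π θ)
    rw [h1]
    exact HasFDerivAt.fun_sum fun s _ => HasFDerivAt.fun_sum fun a _ => (hD s a).smul_const (Emat P s a)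
  have hMder : HasFDerivAt (fun θ => (1 : Matrix S S ℝ) - γ • Pmat P (π θ)) (-(γ • M')) θ0 :=
    (hPmat'.const_smul γ).const_sub 1
  let Winv' : (Fin d → ℝ) →L[ℝ] Matrix S S ℝ :=
    (-(ContinuousLinearMap.mulLeftRight ℝ (Matrix S S ℝ) W W)).comp (-(γ • M'))
  have hWder : HasFDerivAt
      (fun θ => Ring.inverse ((1 : Matrix S S ℝ) - γ • Pmat P (π θ))) Winv' θ0 := by
    have h0 := hasFDerivAt_ringInverse (𝕜 := ℝ) u
    rw [hWu] at h0
    exact h0.comp θ0 hMder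
  -- entry evaluation continuous linear map
  let ent : S → S → (Matrix S S ℝ →L[ℝ] ℝ) := fun i j => LinearMap.toContinuousLinearMap
    { toFun := fun M => M i j, map_add' := fun _ _ => rfl, map_smul' := fun _ _ => rfl }
  have hent : ∀ (i j : S) (M : Matrix S S ℝ), ent i j M = M i j := fun _ _ _ => rfl
  have hWent : ∀ i j, HasFDerivAt
      (fun θ => Ring.inverse ((1 : Matrix S S ℝ) - γ • Pmat P (π θ)) i j)
      ((ent i j).comp Winv') θ0 :=
    fun i j => ((ent i j).hasFDerivAt).comp θ0 hWder
  have hrp : ∀ j : S, HasFDerivAt (fun θ => rPol r (π θ) j) (∑ a, r j a • Dp j a) θ0 := by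
    intro j
    have h1 : (fun θ => rPol r (π θ) j) = fun θ => ∑ a, π θ j a * r j a := rfl
    rw [h1]
    exact HasFDerivAt.fun_sum fun a _ => (hD j a).mul_const (r j a)
  -- derivative of the objective
  let Ltot : (Fin d → ℝ) →L[ℝ] ℝ := ∑ i, ∑ j, q i •
    ((Ring.inverse ((1 : Matrix S S ℝ) - γ • Pmat P (π θ0)) i j) • (∑ a, r j a • Dp j a)
      + rPol r (π θ0) j • ((ent i j).comp Winv'))
  have hJ : HasFDerivAt (fun θ => ∑ s, q s * polValue P r γ (π θ) s) Ltot θ0 := by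
    have hfeq : (fun θ => ∑ s, q s * polValue P r γ (π θ) s)
        = fun θ => ∑ i, ∑ j, q i *
            (Ring.inverse ((1 : Matrix S S ℝ) - γ • Pmat P (π θ)) i j * rPol r (π θ) j) := by
      funext θ
      refine Finset.sum_congr rfl fun i _ => ?_
      rw [pg_polValue_eq P r (π θ) hP hγ0 hγ1 (hpol θ)]
      show q i * ∑ j, Ring.inverse ((1 : Matrix S S ℝ) - γ • Pmat P (π θ)) i j
          * rPol r (π θ) j = _
      rw [Finset.mul_sum]
    rw [hfeq]
    exact HasFDerivAt.fun_sum fun i _ => HasFDerivAt.fun_sum fun j _ =>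
      ((hWent i j).mul (hrp j)).const_mul (q i)
  rw [hJ.fderiv]
  -- rewrite the right-hand side
  have hlog : ∀ (s : S) (a : A), fderiv ℝ (fun θ => Real.log (π θ s a)) θ0
      = (π θ0 s a)⁻¹ • Dp s a :=
    fun s a => ((hD s a).log (ne_of_gt (hpos θ0 s a))).fderiv
  have hvec : ∀ s : S, (∑' t : ℕ, γ ^ t * Matrix.vecMul q (Pmat P (π θ0) ^ t) s)
      = Matrix.vecMul q W s :=
    fun s => pg_vecMul_eq P (π θ0) q hP hγ0 hγ1 (hpol θ0) s
  have hpv : polValue P r γ (π θ0) = W.mulVec (rPol r (π θ0)) :=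
    pg_polValue_eq P r (π θ0) hP hγ0 hγ1 (hpol θ0)
  simp only [hlog, hvec, hpv]
  refine ContinuousLinearMap.ext fun v => ?_
  -- scalar computations
  have hne : (1 : ℝ) - γ ≠ 0 := by intro h; linarith [h]
  let δ : S → A → ℝ := fun s a => Dp s a v
  let K : Matrix S S ℝ := ∑ s, ∑ a, δ s a • Emat P s a
  have hM'v : M' v = K := by
    simp only [M', ContinuousLinearMap.sum_apply, ContinuousLinearMap.smulRight_apply]
    rfl
  have hXv : Winv' v = γ • (W * K * W) := by
    simp only [Winv', ContinuousLinearMap.comp_apply, ContinuousLinearMap.neg_apply,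
      ContinuousLinearMap.coe_smul', Pi.smul_apply, ContinuousLinearMap.mulLeftRight_apply,
      hM'v]
    change -(W * (-(γ • M' v)) * W) = _
    rw [hM'v, mul_neg, neg_mul, neg_neg, Matrix.mul_smul, Matrix.smul_mul]
  -- evaluate the left-hand side at v
  have hLv : Ltot v = ∑ i, ∑ j, q i *
      (W i j * (∑ a, r j a * δ j a) + rPol r (π θ0) j * (γ * (W * K * W) i j)) := by
    simp only [Ltot, ContinuousLinearMap.sum_apply, ContinuousLinearMap.smul_apply,
      ContinuousLinearMap.add_apply, ContinuousLinearMap.comp_apply, smul_eq_mul]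
    refine Finset.sum_congr rfl fun i _ => Finset.sum_congr rfl fun j _ => ?_
    rw [hXv, hent]
    simp [Matrix.smul_apply]
    exact Or.inl rfl
  -- evaluate the right-hand side at v
  have hRv : ((1 - γ)⁻¹ • ∑ s, ∑ a,
        (((1 - γ) * Matrix.vecMul q W s) * π θ0 s a *
          (r s a + γ * ∑ s', P s a s' * (W.mulVec (rPol r (π θ0))) s')) •
        ((π θ0 s a)⁻¹ • Dp s a) : (Fin d → ℝ) →L[ℝ] ℝ) v
      = ∑ s, ∑ a, (∑ x, q x * W x s) * δ s a *
          (r s a + γ * ∑ s', P s a s' * (∑ w, W s' w * rPol r (π θ0) w)) := by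
    simp only [ContinuousLinearMap.smul_apply, ContinuousLinearMap.sum_apply, smul_eq_mul]
    rw [Finset.mul_sum]
    refine Finset.sum_congr rfl fun s _ => ?_
    rw [Finset.mul_sum]
    refine Finset.sum_congr rfl fun a _ => ?_
    have hvm : Matrix.vecMul q W s = ∑ x, q x * W x s := rfl
    have hmv : ∀ s' : S, (W.mulVec (rPol r (π θ0))) s' = ∑ w, W s' w * rPol r (π θ0) w :=
      fun _ => rfl
    simp only [hvm, hmv]
    have hπ : π θ0 s a ≠ 0 := ne_of_gt (hpos θ0 s a)
    field_simp
    ring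
  rw [hLv, hRv]
  exact pg_sum_identity q (rPol r (π θ0)) W K P r δ γ (fun i j => pg_E_sum P δ i j)
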